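/- Let U be a connected open subset of ℂ^m, and let A : U → M_{h×h}(ℂ) and B : U → M_{k×h}(ℂ) be differentiable maps satisfying the infinitesimal period relation dA = Bᵀ dB, i.e. for every x ∈ U and every tangent vector v the directional derivatives satisfy D_v A(x) = B(x)ᵀ · D_v B(x). If the first bilinear relation A(x₀) + A(x₀)ᵀ = B(x₀)ᵀ B(x₀) holds at one point x₀ ∈ U, then A(x) + A(x)ᵀ = B(x)ᵀ B(x) holds at every point x ∈ U. -/

import Mathlib

attribute [local instance] Matrix.normedAddCommGroup Matrix.normedSpace

open Matrix

/-- Transpose of matrices as a continuous linear map. -/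
noncomputable def trCLM (p q : ℕ) : Matrix (Fin p) (Fin q) ℂ →L[ℂ] Matrix (Fin q) (Fin p) ℂ :=
  LinearMap.toContinuousLinearMap (Matrix.transposeLinearEquiv (Fin p) (Fin q) ℂ ℂ).toLinearMap

@[simp] lemma trCLM_apply (p q : ℕ) (M : Matrix (Fin p) (Fin q) ℂ) : trCLM p q M = Mᵀ := rfl

/-- Matrix multiplication as a continuous bilinear map. -/
noncomputable def mulCLM (p q r : ℕ) :
    Matrix (Fin p) (Fin q) ℂ →L[ℂ] Matrix (Fin q) (Fin r) ℂ →L[ℂ] Matrix (Fin p) (Fin r) ℂ :=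
  LinearMap.toContinuousLinearMap
    { toFun := fun M => LinearMap.toContinuousLinearMap
        { toFun := fun N => M * N
          map_add' := fun N₁ N₂ => Matrix.mul_add M N₁ N₂
          map_smul' := fun c N => Matrix.mul_smul M c N }
      map_add' := fun M₁ M₂ =>
        ContinuousLinearMap.ext fun N => Matrix.add_mul M₁ M₂ N
      map_smul' := fun c M =>
        ContinuousLinearMap.ext fun N => Matrix.smul_mul c M N }

@[simp] lemma mulCLM_apply (p q r : ℕ) (M : Matrix (Fin p) (Fin q) ℂ)
    (N : Matrix (Fin q) (Fin r) ℂ) : mulCLM p q r M N = M * N := rfl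

/-- if `A : U → M_{h×h}(ℂ)` and `B : U → M_{k×h}(ℂ)` are differentiable on a
connected open set `U ⊆ ℂ^m` and satisfy the infinitesimal period relation
`D_v A(x) = B(x)ᵀ * D_v B(x)`, and if the first bilinear relation
`A + Aᵀ = Bᵀ B` holds at one point of `U`, then it holds at every point of `U`. -/
theorem first_bilinear_relation_propagates
    (m h k : ℕ) (U : Set (Fin m → ℂ)) (hUopen : IsOpen U) (hUconn : IsConnected U)
    (A : (Fin m → ℂ) → Matrix (Fin h) (Fin h) ℂ)
    (B : (Fin m → ℂ) → Matrix (Fin k) (Fin h) ℂ)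
    (hA : ∀ x ∈ U, DifferentiableAt ℂ A x)
    (hB : ∀ x ∈ U, DifferentiableAt ℂ B x)
    (hrel : ∀ x ∈ U, ∀ v : Fin m → ℂ,
      fderiv ℂ A x v = (B x)ᵀ * fderiv ℂ B x v)
    (x₀ : Fin m → ℂ) (hx₀ : x₀ ∈ U)
    (hinit : A x₀ + (A x₀)ᵀ = (B x₀)ᵀ * B x₀) :
    ∀ x ∈ U, A x + (A x)ᵀ = (B x)ᵀ * B x := by
  set F : (Fin m → ℂ) → Matrix (Fin h) (Fin h) ℂ :=
    fun x => A x + (A x)ᵀ - (B x)ᵀ * B x with hFdef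
  -- F has zero derivative at every point of U
  have hderiv : ∀ x ∈ U, HasFDerivAt F (0 : (Fin m → ℂ) →L[ℂ] Matrix (Fin h) (Fin h) ℂ) x := by
    intro x hx
    have hA' : HasFDerivAt A (fderiv ℂ A x) x := (hA x hx).hasFDerivAt
    have hB' : HasFDerivAt B (fderiv ℂ B x) x := (hB x hx).hasFDerivAt
    have hAT : HasFDerivAt (fun y => (A y)ᵀ) ((trCLM h h).comp (fderiv ℂ A x)) x :=
      (trCLM h h).hasFDerivAt.comp x hA'
    have hBT : HasFDerivAt (fun y => (B y)ᵀ) ((trCLM k h).comp (fderiv ℂ B x)) x :=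
      (trCLM k h).hasFDerivAt.comp x hB'
    have hc : HasFDerivAt (fun y => mulCLM h k h ((B y)ᵀ))
        ((mulCLM h k h).comp ((trCLM k h).comp (fderiv ℂ B x))) x :=
      by
        letI : NormedAddCommGroup (Matrix (Fin k) (Fin h) ℂ →L[ℂ] Matrix (Fin h) (Fin h) ℂ) :=
          ContinuousLinearMap.toNormedAddCommGroup
        letI : NormedSpace ℂ (Matrix (Fin k) (Fin h) ℂ →L[ℂ] Matrix (Fin h) (Fin h) ℂ) :=
          ContinuousLinearMap.toNormedSpace
        exact (mulCLM h k h).hasFDerivAt.comp x hBT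
    have hBtB : HasFDerivAt (fun y => (B y)ᵀ * B y)
        ((mulCLM h k h ((B x)ᵀ)).comp (fderiv ℂ B x) +
          id (α := (Fin m → ℂ) →L[ℂ] Matrix (Fin h) (Fin h) ℂ)
            (((mulCLM h k h).comp ((trCLM k h).comp (fderiv ℂ B x))).flip (B x))) x :=
      hc.clm_apply hB'
    have hFd : HasFDerivAt F
        ((fderiv ℂ A x + (trCLM h h).comp (fderiv ℂ A x)) -
          ((mulCLM h k h ((B x)ᵀ)).comp (fderiv ℂ B x) +
            id (α := (Fin m → ℂ) →L[ℂ] Matrix (Fin h) (Fin h) ℂ)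
            (((mulCLM h k h).comp ((trCLM k h).comp (fderiv ℂ B x))).flip (B x)))) x :=
      (hA'.add hAT).sub hBtB
    have h0 : ((fderiv ℂ A x + (trCLM h h).comp (fderiv ℂ A x)) -
          ((mulCLM h k h ((B x)ᵀ)).comp (fderiv ℂ B x) +
            id (α := (Fin m → ℂ) →L[ℂ] Matrix (Fin h) (Fin h) ℂ)
            (((mulCLM h k h).comp ((trCLM k h).comp (fderiv ℂ B x))).flip (B x))))
        = (0 : (Fin m → ℂ) →L[ℂ] Matrix (Fin h) (Fin h) ℂ) := by
      ext v
      simp only [ContinuousLinearMap.coe_sub', ContinuousLinearMap.coe_add',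
        Pi.sub_apply, Pi.add_apply, ContinuousLinearMap.coe_comp', Function.comp_apply,
        ContinuousLinearMap.flip_apply, trCLM_apply, mulCLM_apply,
        ContinuousLinearMap.zero_apply, id]
      rw [hrel x hx v, Matrix.transpose_mul, Matrix.transpose_transpose]
      erw [ContinuousLinearMap.add_apply]
      exact sub_eq_zero.2 rfl
    exact h0 ▸ hFd
  -- F is locally constant on U
  have locconst : ∀ x ∈ U, ∃ ε > 0, Metric.ball x ε ⊆ U ∧
      ∀ y ∈ Metric.ball x ε, F y = F x := by
    intro x hx
    obtain ⟨ε, hε, hball⟩ := Metric.isOpen_iff.1 hUopen x hx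
    refine ⟨ε, hε, hball, fun y hy => ?_⟩
    refine (convex_ball x ε).is_const_of_fderivWithin_eq_zero
      (fun z hz => (hderiv z (hball hz)).differentiableAt.differentiableWithinAt)
      (fun z hz => ?_) hy (Metric.mem_ball_self hε)
    rw [fderivWithin_of_isOpen Metric.isOpen_ball hz]
    exact (hderiv z (hball hz)).fderiv
  -- clopen argument
  set V : Set (Fin m → ℂ) := {x | ∃ ε > 0, Metric.ball x ε ⊆ U ∧ ∀ y ∈ Metric.ball x ε, F y = 0}
  set W : Set (Fin m → ℂ) := {x | ∃ ε > 0, Metric.ball x ε ⊆ U ∧ ∀ y ∈ Metric.ball x ε, F y ≠ 0}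
  have hVopen : IsOpen V := by
    refine Metric.isOpen_iff.2 fun x ⟨ε, hε, hsub, hconst⟩ => ⟨ε, hε, fun y hy => ?_⟩
    obtain ⟨δ, hδ, hδsub⟩ := Metric.isOpen_iff.1 Metric.isOpen_ball y hy
    exact ⟨δ, hδ, fun z hz => hsub (hδsub hz), fun z hz => hconst z (hδsub hz)⟩
  have hWopen : IsOpen W := by
    refine Metric.isOpen_iff.2 fun x ⟨ε, hε, hsub, hconst⟩ => ⟨ε, hε, fun y hy => ?_⟩
    obtain ⟨δ, hδ, hδsub⟩ := Metric.isOpen_iff.1 Metric.isOpen_ball y hy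
    exact ⟨δ, hδ, fun z hz => hsub (hδsub hz), fun z hz => hconst z (hδsub hz)⟩
  have hdisj : Disjoint V W := by
    rw [Set.disjoint_left]
    rintro x ⟨ε, hε, -, h0⟩ ⟨δ, hδ, -, hne⟩
    exact hne x (Metric.mem_ball_self hδ) (h0 x (Metric.mem_ball_self hε))
  have hcover : U ⊆ V ∪ W := by
    intro x hx
    obtain ⟨ε, hε, hsub, hconst⟩ := locconst x hx
    by_cases h : F x = 0
    · exact Or.inl ⟨ε, hε, hsub, fun y hy => (hconst y hy).trans h⟩
    · exact Or.inr ⟨ε, hε, hsub, fun y hy => (hconst y hy).symm ▸ h⟩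
  have hx₀V : x₀ ∈ V := by
    obtain ⟨ε, hε, hsub, hconst⟩ := locconst x₀ hx₀
    have hF0 : F x₀ = 0 := by
      simp only [hFdef]
      rw [hinit]; exact sub_self _
    exact ⟨ε, hε, hsub, fun y hy => (hconst y hy).trans hF0⟩
  have hUV : U ⊆ V := by
    rcases hUconn.isPreconnected.subset_or_subset hVopen hWopen hdisj hcover with hV | hW
    · exact hV
    · exact absurd (hW hx₀) (Set.disjoint_left.1 hdisj hx₀V)
  intro x hx
  obtain ⟨ε, hε, -, h0⟩ := hUV hx
  have := h0 x (Metric.mem_ball_self hε)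
  simp only [hFdef] at this
  exact sub_eq_zero.1 this
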